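/- Let Λ be a finite-dimensional algebra over a field k (or more generally an artin algebra) and let M and N be finite-length Λ-modules. Then there exists a finite-length Λ-module Z and a short exact sequence of Λ-modules 0 → N → M ⊕ Z → Z → 0 if and only if there exists a finite-length Λ-module X and a short exact sequence of Λ-modules 0 → X → M ⊕ X → N → 0. -/

import Mathlib

universe u v

section RiedtmannZwaraAux

open LinearMap Submodule Function

variable {R : Type u} [Ring R]


lemma fl_of_na {Z : Type v} [AddCommGroup Z] [Module R Z] [IsNoetherian R Z] [IsArtinian R Z] :
    IsFiniteLength R Z := isFiniteLength_iff_isNoetherian_isArtinian.mpr ⟨‹_›, ‹_›⟩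

lemma fl_pi {M : Type v} [AddCommGroup M] [Module R M] (hM : IsFiniteLength R M) (k : ℕ) :
    IsFiniteLength R (Fin k → M) := by
  obtain ⟨hN, hA⟩ := isFiniteLength_iff_isNoetherian_isArtinian.mp hM
  exact fl_of_na

lemma fl_submodule {M : Type v} [AddCommGroup M] [Module R M] (hM : IsFiniteLength R M)
    (p : Submodule R M) : IsFiniteLength R p := by
  obtain ⟨hN, hA⟩ := isFiniteLength_iff_isNoetherian_isArtinian.mp hM
  exact fl_of_na

lemma fl_quotient {M : Type v} [AddCommGroup M] [Module R M] (hM : IsFiniteLength R M)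
    (p : Submodule R M) : IsFiniteLength R (M ⧸ p) := by
  obtain ⟨hN, hA⟩ := isFiniteLength_iff_isNoetherian_isArtinian.mp hM
  exact fl_of_na

lemma fl_split {Z : Type v} [AddCommGroup Z] [Module R Z] (h : IsFiniteLength R Z) :
    IsNoetherian R Z ∧ IsArtinian R Z := isFiniteLength_iff_isNoetherian_isArtinian.mp h

lemma exists_stable {Z : Type v} [AddCommGroup Z] [Module R Z]
    (hZ : IsFiniteLength R Z) (ψ : Z →ₗ[R] Z) :
    ∃ n : ℕ, 0 < n ∧ ∀ m, n ≤ m →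
      ker (ψ ^ m) = ker (ψ ^ n) ∧ range (ψ ^ m) = range (ψ ^ n) := by
  obtain ⟨hN, hA⟩ := fl_split hZ
  obtain ⟨n₁, h₁⟩ := monotone_stabilizes_iff_noetherian.mpr hN ψ.iterateKer
  obtain ⟨n₂, h₂⟩ := IsArtinian.monotone_stabilizes ψ.iterateRange
  refine ⟨n₁ + n₂ + 1, Nat.succ_pos _, fun m hm => ⟨?_, ?_⟩⟩
  · have a := h₁ m (by omega); have b := h₁ (n₁ + n₂ + 1) (by omega)
    exact (b.symm.trans a).symm
  · have a := h₂ m (by omega); have b := h₂ (n₁ + n₂ + 1) (by omega)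
    have := b.symm.trans a
    exact this.symm

section Dir1Nil
variable {M N Z : Type v} [AddCommGroup M] [Module R M] [AddCommGroup N] [Module R N]
  [AddCommGroup Z] [Module R Z]

lemma zwara_to_riedtmann_nil
    (hM : IsFiniteLength R M)
    (f : N →ₗ[R] M × Z) (g : M × Z →ₗ[R] Z)
    (hf : Injective f) (hg : Surjective g) (hfg : range f = ker g)
    (n : ℕ) (hnil : ((g ∘ₗ inr R M Z : Z →ₗ[R] Z)) ^ (n + 1) = 0) :
    ∃ (X : Type v) (_ : AddCommGroup X) (_ : Module R X), IsFiniteLength R X ∧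
      ∃ (f' : X →ₗ[R] M × X) (g' : M × X →ₗ[R] N),
        Injective f' ∧ Surjective g' ∧ range f' = ker g' := by
  classical
  set γ : M →ₗ[R] Z := g ∘ₗ inl R M Z with hγ
  set δ : Z →ₗ[R] Z := g ∘ₗ inr R M Z with hδ
  have hgdec : ∀ (m : M) (z : Z), g (m, z) = γ m + δ z := by
    intro m z
    have : (m, z) = ((m, 0) : M × Z) + (0, z) := by simp
    rw [this, map_add]; rfl
  have hnil' : ∀ z : Z, (δ ^ (n+1)) z = 0 := by
    intro z; rw [hδ, hnil]; rfl
  -- the map T₁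
  set T : (Fin (n+1) → M) →ₗ[R] Z :=
    ∑ i : Fin (n+1), ((δ ^ (i : ℕ)) ∘ₗ γ) ∘ₗ LinearMap.proj i with hT
  have hTapp : ∀ m : Fin (n+1) → M, T m = ∑ i : Fin (n+1), (δ ^ (i : ℕ)) (γ (m i)) := by
    intro m; rw [hT]; simp [LinearMap.sum_apply]
  -- T is surjective
  have hTsurj : ∀ z : Z, ∃ m : Fin (n+1) → M, T m = z := by
    have key : ∀ (k : ℕ) (z : Z), ∃ (m : Fin (n+1) → M) (w : Z), z = T m + (δ ^ k) w := by
      intro k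
      induction k with
      | zero => intro z; exact ⟨0, z, by simp [hTapp]⟩
      | succ k ih =>
        intro z
        obtain ⟨m, w, hw⟩ := ih z
        by_cases hk : k < n + 1
        · obtain ⟨⟨m', w'⟩, hq⟩ := hg w
          refine ⟨m + Pi.single ⟨k, hk⟩ m', w', ?_⟩
          have h1 : T (Pi.single ⟨k, hk⟩ m') = (δ ^ k) (γ m') := by
            rw [hTapp]
            rw [Finset.sum_eq_single (⟨k, hk⟩ : Fin (n+1))]
            · simp
            · intro i _ hne; rw [Pi.single_eq_of_ne hne]; simp
            · simp
          have h2 : g (m', w') = γ m' + δ w' := hgdec m' w'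
          rw [hw, ← hq, h2, map_add, map_add, h1]
          have h3 : (δ ^ (k+1)) w' = (δ ^ k) (δ w') := by
            rw [pow_succ]; rfl
          rw [h3]; abel
        · refine ⟨m, 0, ?_⟩
          have hz : (δ ^ k) w = 0 := by
            have : δ ^ k = δ ^ (n+1) * δ ^ (k - (n+1)) := by
              rw [← pow_add]; congr 1; omega
            rw [this]; simp only [Module.End.mul_apply]
            exact hnil' _
          rw [hw, hz]; simp
    intro z
    obtain ⟨m, w, hw⟩ := key (n+1) z
    exact ⟨m, by rw [hw, hnil' w, add_zero]⟩
  -- X := ker T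
  set X : Submodule R (Fin (n+1) → M) := ker T with hX
  -- shift-with-leading-zero map J : (0, m₀, ..., m_{n-1})
  set J : (Fin (n+1) → M) →ₗ[R] (Fin (n+1) → M) :=
    LinearMap.pi (fun i => Fin.cases 0 (fun j => LinearMap.proj j.castSucc) i) with hJ
  have hJ0 : ∀ m : Fin (n+1) → M, J m 0 = 0 := by
    intro m; rw [hJ]; simp [LinearMap.pi_apply]
  have hJs : ∀ (m : Fin (n+1) → M) (j : Fin n), J m j.succ = m j.castSucc := by
    intro m j; rw [hJ]; simp [LinearMap.pi_apply]
  -- auxiliary: δ (T m) in terms of shifted sum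
  have hTJ : ∀ m : Fin (n+1) → M, m ∈ X → J m ∈ X := by
    intro m hm
    have h1 : T (J m) = ∑ j : Fin n, (δ ^ ((j : ℕ) + 1)) (γ (m j.castSucc)) := by
      rw [hTapp, Fin.sum_univ_succ, hJ0]
      simp only [map_zero]
      rw [zero_add]
      refine Finset.sum_congr rfl (fun j _ => ?_)
      rw [hJs]
      congr 1 <;> simp
    have h2 : δ (T m) = ∑ j : Fin n, (δ ^ ((j : ℕ) + 1)) (γ (m j.castSucc))
        + (δ ^ (n+1)) (γ (m (Fin.last n))) := by
      rw [hTapp, map_sum, Fin.sum_univ_castSucc]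
      congr 1
      · refine Finset.sum_congr rfl (fun j _ => ?_)
        rw [← Module.End.mul_apply, ← pow_succ']
        congr 2 <;> simp
      · rw [← Module.End.mul_apply, ← pow_succ']
        congr 2 <;> simp
    have hm0 : T m = 0 := hm
    have : T (J m) = δ (T m) - (δ ^ (n+1)) (γ (m (Fin.last n))) := by
      rw [h1, h2]; abel
    rw [hX, mem_ker, this, hm0, map_zero, hnil', zero_sub, neg_zero]
  -- f₁
  set f₁ : X →ₗ[R] M × X :=
    LinearMap.prod (LinearMap.proj (Fin.last n) ∘ₗ X.subtype) (J.restrict hTJ) with hf₁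
  have hf₁app1 : ∀ x : X, (f₁ x).1 = (x : Fin (n+1) → M) (Fin.last n) := fun x => rfl
  have hf₁app2 : ∀ x : X, ((f₁ x).2 : Fin (n+1) → M) = J (x : Fin (n+1) → M) := fun x => rfl
  have hf₁inj : Injective f₁ := by
    intro x y hxy
    have h1 := congrArg Prod.fst hxy
    have h2 := congrArg (fun p : M × X => ((p.2 : X) : Fin (n+1) → M)) hxy
    simp only [hf₁app1] at h1
    rw [hf₁app2, hf₁app2] at h2
    ext i
    refine Fin.lastCases h1 (fun j => ?_) i
    have := congrFun h2 j.succ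
    rwa [hJs, hJs] at this
  -- the "rotate with a" map K : (a, x) ↦ (x₁, ..., xₙ, a)
  set K : M × X →ₗ[R] (Fin (n+1) → M) :=
    LinearMap.pi (fun i => Fin.lastCases (LinearMap.fst R M X)
      (fun j => (LinearMap.proj j.succ) ∘ₗ X.subtype ∘ₗ LinearMap.snd R M X) i) with hK
  have hKlast : ∀ p : M × X, K p (Fin.last n) = p.1 := by
    intro p; rw [hK]; simp [LinearMap.pi_apply]
  have hKcast : ∀ (p : M × X) (j : Fin n), K p j.castSucc = (p.2 : Fin (n+1) → M) j.succ := by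
    intro p j; rw [hK]; simp [LinearMap.pi_apply]
  -- L : M × X → M × Z, landing in range f
  set L : M × X →ₗ[R] M × Z :=
    LinearMap.prod ((LinearMap.proj 0) ∘ₗ X.subtype ∘ₗ LinearMap.snd R M X) (T ∘ₗ K) with hL
  have hLapp : ∀ p : M × X, L p = ((p.2 : Fin (n+1) → M) 0, T (K p)) := fun p => rfl
  have hTx : ∀ x : X, γ ((x : Fin (n+1) → M) 0)
      + ∑ j : Fin n, (δ ^ ((j:ℕ)+1)) (γ ((x : Fin (n+1) → M) j.succ)) = 0 := by
    intro x
    have hx : T (x : Fin (n+1) → M) = 0 := x.2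
    rw [hTapp, Fin.sum_univ_succ] at hx
    simpa using hx
  have hδTK : ∀ p : M × X, δ (T (K p))
      = ∑ j : Fin n, (δ ^ ((j:ℕ)+1)) (γ ((p.2 : Fin (n+1) → M) j.succ)) := by
    intro p
    rw [hTapp, map_sum, Fin.sum_univ_castSucc]
    have hlast : δ ((δ ^ ((Fin.last n : Fin (n+1)) : ℕ)) (γ (K p (Fin.last n)))) = 0 := by
      rw [← Module.End.mul_apply, ← pow_succ']
      have : ((Fin.last n : Fin (n+1)) : ℕ) = n := rfl
      rw [this]
      exact hnil' _
    rw [hlast, add_zero]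
    refine Finset.sum_congr rfl (fun j _ => ?_)
    rw [hKcast, ← Module.End.mul_apply, ← pow_succ']
    congr 2 <;> simp
  have hLrange : ∀ p : M × X, L p ∈ range f := by
    intro p
    rw [hfg, mem_ker, hLapp, hgdec, hδTK]
    exact hTx p.2
  set ρ : N ≃ₗ[R] range f := LinearEquiv.ofInjective f hf with hρ
  set g₁ : M × X →ₗ[R] N :=
    ρ.symm.toLinearMap ∘ₗ (L.codRestrict (range f) hLrange) with hg₁
  have hg₁app : ∀ p : M × X, g₁ p = ρ.symm ⟨L p, hLrange p⟩ := fun p => rfl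
  have hρf : ∀ ν : N, (ρ ν : M × Z) = f ν := fun ν => rfl
  -- surjectivity of g₁
  have hg₁surj : Surjective g₁ := by
    intro ν
    obtain ⟨mz, hmz⟩ : f ν ∈ range f := ⟨ν, rfl⟩
    have hker : γ (f ν).1 + δ (f ν).2 = 0 := by
      have : f ν ∈ ker g := hfg ▸ (⟨ν, rfl⟩ : f ν ∈ range f)
      rw [mem_ker] at this
      rw [← hgdec]
      simpa using this
    obtain ⟨y, hy⟩ := hTsurj (f ν).2
    -- candidate x-part : (m₀, y₀, ..., y_{n-1})
    set c : Fin (n+1) → M := Fin.cons (f ν).1 (fun j => y j.castSucc) with hc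
    have hc0 : c 0 = (f ν).1 := by rw [hc]; simp
    have hcs : ∀ j : Fin n, c j.succ = y j.castSucc := by intro j; rw [hc]; simp
    have hcX : c ∈ X := by
      have h2 : δ (T y) = ∑ j : Fin n, (δ ^ ((j : ℕ) + 1)) (γ (y j.castSucc))
          + (δ ^ (n+1)) (γ (y (Fin.last n))) := by
        rw [hTapp, map_sum, Fin.sum_univ_castSucc]
        congr 1
        · refine Finset.sum_congr rfl (fun j _ => ?_)
          rw [← Module.End.mul_apply, ← pow_succ']
          congr 2 <;> simp
        · rw [← Module.End.mul_apply, ← pow_succ']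
          congr 2 <;> simp
      have hTc : T c = γ ((f ν).1) + ∑ j : Fin n, (δ ^ ((j:ℕ)+1)) (γ (y j.castSucc)) := by
        rw [hTapp, Fin.sum_univ_succ, hc0]
        norm_num
        exact Finset.sum_congr rfl (fun j _ => by rw [hcs])
      rw [hX, mem_ker, hTc]
      have : ∑ j : Fin n, (δ ^ ((j:ℕ)+1)) (γ (y j.castSucc))
          = δ (T y) - (δ ^ (n+1)) (γ (y (Fin.last n))) := by rw [h2]; abel
      rw [this, hnil', hy, sub_zero, hker]
    refine ⟨(y (Fin.last n), ⟨c, hcX⟩), ?_⟩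
    have hKval : K (y (Fin.last n), (⟨c, hcX⟩ : X)) = y := by
      ext i
      refine Fin.lastCases ?_ (fun j => ?_) i
      · rw [hKlast]
      · rw [hKcast]; exact hcs j
    have hLval : L (y (Fin.last n), (⟨c, hcX⟩ : X)) = f ν := by
      rw [hLapp]
      simp only
      rw [hKval, hy, hc0]
    rw [hg₁app]
    have : (⟨L (y (Fin.last n), (⟨c, hcX⟩ : X)), hLrange _⟩ : range f) = ρ ν := by
      apply Subtype.ext
      show L _ = ((ρ ν : range f) : M × Z)
      rw [hLval, hρf]
    rw [this, LinearEquiv.symm_apply_apply]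
  -- exactness at the middle
  have hrange_ker : range f₁ = ker g₁ := by
    apply le_antisymm
    · rintro _ ⟨x, rfl⟩
      rw [mem_ker, hg₁app]
      have hzero : L (f₁ x) = 0 := by
        rw [hLapp]
        have e1 : ((f₁ x).2 : Fin (n+1) → M) 0 = 0 := by rw [hf₁app2]; exact hJ0 _
        have e2 : K (f₁ x) = (x : Fin (n+1) → M) := by
          ext i
          refine Fin.lastCases ?_ (fun j => ?_) i
          · rw [hKlast, hf₁app1]
          · rw [hKcast, hf₁app2, hJs]
        rw [e1, e2]
        have : T (x : Fin (n+1) → M) = 0 := x.2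
        rw [this]
        rfl
      have : (⟨L (f₁ x), hLrange _⟩ : range f) = 0 := by
        apply Subtype.ext
        show L (f₁ x) = (0 : M × Z)
        rw [hzero]
      rw [this, map_zero]
    · rintro ⟨a, x⟩ hp
      rw [mem_ker, hg₁app] at hp
      have hL0 : L (a, x) = 0 := by
        have : (⟨L (a, x), hLrange _⟩ : range f) = 0 := by
          have := congrArg ρ hp
          rwa [LinearEquiv.apply_symm_apply, map_zero] at this
        have h' := congrArg (fun q : range f => (q : M × Z)) this
        simpa using h'
      have h1 : (x : Fin (n+1) → M) 0 = 0 := congrArg Prod.fst (hLapp (a,x) ▸ hL0)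
      have h2 : T (K (a, x)) = 0 := congrArg Prod.snd (hLapp (a,x) ▸ hL0)
      have hKX : K (a, x) ∈ X := h2
      refine ⟨⟨K (a, x), hKX⟩, ?_⟩
      have e1 : (f₁ ⟨K (a,x), hKX⟩).1 = a := by rw [hf₁app1]; exact hKlast (a, x)
      have e2 : ((f₁ ⟨K (a,x), hKX⟩).2 : Fin (n+1) → M) = (x : Fin (n+1) → M) := by
        rw [hf₁app2]
        ext i
        refine Fin.cases ?_ (fun j => ?_) i
        · rw [hJ0]; exact h1.symm
        · rw [hJs]; exact hKcast (a, x) j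
      have : f₁ ⟨K (a,x), hKX⟩ = (a, x) := by
        apply Prod.ext
        · exact e1
        · exact Subtype.ext e2
      exact this
  exact ⟨X, inferInstance, inferInstance, fl_submodule (fl_pi hM (n+1)) X, f₁, g₁, hf₁inj, hg₁surj, hrange_ker⟩

lemma zwara_to_riedtmann
    (hM : IsFiniteLength R M) (hZ : IsFiniteLength R Z)
    (f : N →ₗ[R] M × Z) (g : M × Z →ₗ[R] Z)
    (hf : Injective f) (hg : Surjective g) (hfg : range f = ker g) :
    ∃ (X : Type v) (_ : AddCommGroup X) (_ : Module R X), IsFiniteLength R X ∧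
      ∃ (f' : X →ₗ[R] M × X) (g' : M × X →ₗ[R] N),
        Injective f' ∧ Surjective g' ∧ range f' = ker g' := by
  classical
  set γ : M →ₗ[R] Z := g ∘ₗ inl R M Z with hγ
  set δ : Z →ₗ[R] Z := g ∘ₗ inr R M Z with hδ
  have hgdec : ∀ (m : M) (z : Z), g (m, z) = γ m + δ z := by
    intro m z
    have : (m, z) = ((m, 0) : M × Z) + (0, z) := by simp
    rw [this, map_add]; rfl
  obtain ⟨n, hn0, hstab⟩ := exists_stable hZ δ
  set I : Submodule R Z := range (δ ^ n) with hI
  have hδI : I ≤ Submodule.comap δ I := by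
    rintro z ⟨w, rfl⟩
    refine ⟨δ w, ?_⟩
    have h1 : (δ ^ n) (δ w) = (δ ^ (n+1)) w := by rw [pow_succ, Module.End.mul_apply]
    have h2 : δ ((δ ^ n) w) = (δ ^ (n+1)) w := by rw [pow_succ', Module.End.mul_apply]
    rw [h1, ← h2]
  set δ' : (Z ⧸ I) →ₗ[R] (Z ⧸ I) := Submodule.mapQ I I δ hδI with hδ'
  set γ' : M →ₗ[R] (Z ⧸ I) := I.mkQ ∘ₗ γ with hγ'
  set g' : M × (Z ⧸ I) →ₗ[R] (Z ⧸ I) :=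
    γ' ∘ₗ LinearMap.fst R M (Z ⧸ I) + δ' ∘ₗ LinearMap.snd R M (Z ⧸ I) with hg'
  set f' : N →ₗ[R] M × (Z ⧸ I) := (LinearMap.prodMap LinearMap.id I.mkQ) ∘ₗ f with hf'
  have hg'app0 : ∀ (m : M) (q : Z ⧸ I), g' (m, q) = γ' m + δ' q := fun m q => rfl
  have hδ'app : ∀ z : Z, δ' (I.mkQ z) = I.mkQ (δ z) := by
    intro z
    rw [hδ', Submodule.mkQ_apply, Submodule.mapQ_apply, Submodule.mkQ_apply]
  have hg'app : ∀ (m : M) (z : Z), g' (m, I.mkQ z) = I.mkQ (γ m + δ z) := by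
    intro m z
    rw [hg'app0, hδ'app, map_add]
    rfl
  have hf'app : ∀ ν : N, f' ν = ((f ν).1, I.mkQ (f ν).2) := fun ν => rfl
  have hfker : ∀ ν : N, γ (f ν).1 + δ (f ν).2 = 0 := by
    intro ν
    have : f ν ∈ ker g := hfg ▸ (⟨ν, rfl⟩ : f ν ∈ range f)
    rw [mem_ker] at this
    rw [← hgdec]
    simpa using this
  -- injectivity of f'
  have hf'inj : Injective f' := by
    intro ν₁ ν₂ h
    rw [← sub_eq_zero] at h ⊢
    rw [← map_sub] at h
    set ν := ν₁ - ν₂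
    apply hf
    rw [map_zero]
    have h1 : (f ν).1 = 0 := congrArg Prod.fst h
    have h2 : I.mkQ (f ν).2 = 0 := by
      have := congrArg Prod.snd h
      rw [hf'app] at this
      exact this
    rw [Submodule.mkQ_apply, Submodule.Quotient.mk_eq_zero] at h2
    obtain ⟨w, hw⟩ := h2
    have hδz : δ (f ν).2 = 0 := by
      have := hfker ν
      rw [h1, map_zero, zero_add] at this
      exact this
    have hw' : (δ ^ (n+1)) w = 0 := by
      rw [pow_succ', Module.End.mul_apply, hw, hδz]
    have : w ∈ ker (δ ^ n) := by
      rw [← (hstab (n+1) (by omega)).1]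
      exact hw'
    rw [mem_ker] at this
    have : (f ν).2 = 0 := by rw [← hw, this]
    rw [Prod.ext_iff]
    exact ⟨h1, this⟩
  -- surjectivity of g'
  have hg'surj : Surjective g' := by
    intro q
    obtain ⟨z, rfl⟩ := I.mkQ_surjective q
    obtain ⟨⟨m, w⟩, hmw⟩ := hg z
    refine ⟨(m, I.mkQ w), ?_⟩
    rw [hg'app, ← hgdec, hmw]
  -- exactness
  have hfg' : range f' = ker g' := by
    apply le_antisymm
    · rintro _ ⟨ν, rfl⟩
      rw [mem_ker, hf'app, hg'app, hfker, map_zero]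
    · rintro ⟨m, q⟩ hq
      obtain ⟨z, rfl⟩ := I.mkQ_surjective q
      rw [mem_ker, hg'app, Submodule.mkQ_apply, Submodule.Quotient.mk_eq_zero] at hq
      obtain ⟨w, hw⟩ := hq
      have : (δ ^ n) w ∈ range (δ ^ (n+1)) := by
        rw [(hstab (n+1) (by omega)).2]
        exact ⟨w, rfl⟩
      obtain ⟨w', hw'⟩ := this
      have hker : γ m + δ (z - (δ ^ n) w') = 0 := by
        rw [map_sub]
        have : δ ((δ ^ n) w') = (δ ^ (n+1)) w' := by
          rw [pow_succ', Module.End.mul_apply]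
        rw [this, hw', hw]
        abel
      have : (m, z - (δ ^ n) w') ∈ ker g := by
        rw [mem_ker, hgdec, hker]
      rw [← hfg] at this
      obtain ⟨ν, hν⟩ := this
      refine ⟨ν, ?_⟩
      rw [hf'app, hν]
      simp only
      apply Prod.ext
      · rfl
      · show I.mkQ (z - (δ ^ n) w') = I.mkQ z
        rw [← sub_eq_zero, ← map_sub]
        have : z - (δ ^ n) w' - z = -((δ ^ n) w') := by abel
        rw [this, map_neg, neg_eq_zero, Submodule.mkQ_apply,
          Submodule.Quotient.mk_eq_zero]
        exact ⟨w', rfl⟩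
  -- nilpotency of induced δ'
  have hδ'pow : ∀ (k : ℕ) (z : Z), (δ' ^ k) (I.mkQ z) = I.mkQ ((δ ^ k) z) := by
    intro k
    induction k with
    | zero => intro z; simp
    | succ k ih =>
      intro z
      rw [pow_succ', Module.End.mul_apply, ih, hδ'app, ← Module.End.mul_apply, ← pow_succ']
  have hcomp : (g' ∘ₗ inr R M (Z ⧸ I)) = δ' := by
    apply LinearMap.ext; intro q
    rw [LinearMap.comp_apply, inr_apply, hg'app0, map_zero, zero_add]
  obtain ⟨k, rfl⟩ : ∃ k, n = k + 1 := ⟨n - 1, by omega⟩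
  have hnilfinal : (g' ∘ₗ inr R M (Z ⧸ I)) ^ (k + 1) = 0 := by
    rw [hcomp]
    apply LinearMap.ext; intro q
    obtain ⟨z, rfl⟩ := I.mkQ_surjective q
    rw [Submodule.mkQ_apply] at *
    rw [← Submodule.mkQ_apply, hδ'pow, Submodule.mkQ_apply, LinearMap.zero_apply,
      Submodule.Quotient.mk_eq_zero]
    exact ⟨z, rfl⟩
  exact zwara_to_riedtmann_nil hM f' g' hf'inj hg'surj hfg' k hnilfinal

end Dir1Nil


lemma fl_of_na' {Z : Type v} [AddCommGroup Z] [Module R Z] [IsNoetherian R Z] [IsArtinian R Z] :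
    IsFiniteLength R Z := isFiniteLength_iff_isNoetherian_isArtinian.mpr ⟨‹_›, ‹_›⟩

lemma fl_pi' {M : Type v} [AddCommGroup M] [Module R M] (hM : IsFiniteLength R M) (k : ℕ) :
    IsFiniteLength R (Fin k → M) := by
  obtain ⟨hN, hA⟩ := isFiniteLength_iff_isNoetherian_isArtinian.mp hM
  exact fl_of_na'

lemma fl_quotient' {M : Type v} [AddCommGroup M] [Module R M] (hM : IsFiniteLength R M)
    (p : Submodule R M) : IsFiniteLength R (M ⧸ p) := by
  obtain ⟨hN, hA⟩ := isFiniteLength_iff_isNoetherian_isArtinian.mp hM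
  exact fl_of_na'

section Dir2Nil
variable {M N X : Type v} [AddCommGroup M] [Module R M] [AddCommGroup N] [Module R N]
  [AddCommGroup X] [Module R X]

lemma riedtmann_to_zwara_nil (hM : IsFiniteLength R M)
    (f : X →ₗ[R] M × X) (g : M × X →ₗ[R] N)
    (hf : Injective f) (hg : Surjective g) (hfg : range f = ker g)
    (n : ℕ) (hnil : ((LinearMap.snd R M X ∘ₗ f : X →ₗ[R] X)) ^ (n + 1) = 0) :
    ∃ (Z : Type v) (_ : AddCommGroup Z) (_ : Module R Z), IsFiniteLength R Z ∧
      ∃ (f' : N →ₗ[R] M × Z) (g' : M × Z →ₗ[R] Z),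
        Injective f' ∧ Surjective g' ∧ range f' = ker g' := by
  classical
  set φ : X →ₗ[R] M := LinearMap.fst R M X ∘ₗ f with hφ
  set ψ : X →ₗ[R] X := LinearMap.snd R M X ∘ₗ f with hψ
  have hfdec : ∀ x : X, f x = (φ x, ψ x) := fun x => rfl
  have hnil' : ∀ x : X, (ψ ^ (n+1)) x = 0 := by
    intro x; rw [hψ, hnil]; rfl
  -- the map S
  set S : X →ₗ[R] (Fin (n+1) → M) :=
    LinearMap.pi (fun i => φ ∘ₗ (ψ ^ (i : ℕ))) with hS
  have hSapp : ∀ (x : X) (i : Fin (n+1)), S x i = φ ((ψ ^ (i : ℕ)) x) := by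
    intro x i; rw [hS]; simp [LinearMap.pi_apply]
  -- S is injective
  have hSzero : ∀ x : X, S x = 0 → x = 0 := by
    intro x hx
    have key : ∀ k : ℕ, (ψ ^ (n + 1 - k)) x = 0 := by
      intro k
      induction k with
      | zero => simpa using hnil' x
      | succ k ih =>
        by_cases hk : k < n + 1
        · have e : n + 1 - k = (n - k) + 1 := by omega
          rw [e] at ih
          set t := (ψ ^ (n - k)) x with ht
          have hψt : ψ t = 0 := by
            rw [ht, ← Module.End.mul_apply, ← pow_succ']
            exact ih
          have hφt : φ t = 0 := by
            have := congrFun hx (⟨n - k, by omega⟩ : Fin (n+1))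
            rw [hSapp] at this
            simpa using this
          have hft : f t = 0 := by
            rw [hfdec, hφt, hψt]; rfl
          have ht0 : t = 0 := by
            apply hf
            rw [hft, map_zero]
          have e2 : n + 1 - (k + 1) = n - k := by omega
          rw [e2]
          exact ht0
        · have e : n + 1 - (k + 1) = n + 1 - k := by omega
          rw [e]
          exact ih
    have := key (n + 1)
    simpa using this
  have hSinj : Injective S := by
    intro x y hxy
    rw [← sub_eq_zero]
    apply hSzero
    rw [map_sub, hxy, sub_self]
  -- Z := coker S
  set W : Submodule R (Fin (n+1) → M) := range S with hW
  -- the shift map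
  set sh : (Fin (n+1) → M) →ₗ[R] (Fin (n+1) → M) :=
    LinearMap.pi (fun i => Fin.lastCases 0 (fun j => LinearMap.proj j.succ) i) with hsh
  have hshlast : ∀ m : Fin (n+1) → M, sh m (Fin.last n) = 0 := by
    intro m; rw [hsh]; simp [LinearMap.pi_apply]
  have hshcast : ∀ (m : Fin (n+1) → M) (j : Fin n), sh m j.castSucc = m j.succ := by
    intro m j; rw [hsh]; simp [LinearMap.pi_apply]
  have hshS : W ≤ Submodule.comap sh W := by
    rintro _ ⟨x, rfl⟩
    refine ⟨ψ x, ?_⟩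
    ext i
    refine Fin.lastCases ?_ (fun j => ?_) i
    · rw [hSapp, hshlast]
      have : ((Fin.last n : Fin (n+1)) : ℕ) = n := rfl
      rw [this, ← Module.End.mul_apply, ← pow_succ, hnil', map_zero]
    · rw [hSapp, hshcast, hSapp]
      have e1 : ((j.castSucc : Fin (n+1)) : ℕ) = (j : ℕ) := rfl
      have e2 : ((j.succ : Fin (n+1)) : ℕ) = (j : ℕ) + 1 := rfl
      rw [e1, e2, ← Module.End.mul_apply, ← pow_succ]
  set δ₂ : ((Fin (n+1) → M) ⧸ W) →ₗ[R] ((Fin (n+1) → M) ⧸ W) :=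
    Submodule.mapQ W W sh hshS with hδ₂
  set γ₂ : M →ₗ[R] ((Fin (n+1) → M) ⧸ W) :=
    W.mkQ ∘ₗ LinearMap.single R (fun _ : Fin (n+1) => M) (Fin.last n) with hγ₂
  set g₂ : M × ((Fin (n+1) → M) ⧸ W) →ₗ[R] ((Fin (n+1) → M) ⧸ W) :=
    γ₂ ∘ₗ LinearMap.fst R M _ + δ₂ ∘ₗ LinearMap.snd R M _ with hg₂
  have hg₂app0 : ∀ (a : M) (q : (Fin (n+1) → M) ⧸ W), g₂ (a, q) = γ₂ a + δ₂ q :=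
    fun a q => rfl
  have hδ₂app : ∀ m : Fin (n+1) → M, δ₂ (W.mkQ m) = W.mkQ (sh m) := by
    intro m
    rw [hδ₂, Submodule.mkQ_apply, Submodule.mapQ_apply, Submodule.mkQ_apply]
  have hγ₂app : ∀ a : M, γ₂ a = W.mkQ (Pi.single (Fin.last n) a) := by
    intro a; rw [hγ₂]; rfl
  have hg₂mk : ∀ (a : M) (m : Fin (n+1) → M),
      g₂ (a, W.mkQ m) = W.mkQ (Pi.single (Fin.last n) a + sh m) := by
    intro a m
    rw [hg₂app0, hδ₂app, hγ₂app, map_add]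
  -- surjectivity of g₂
  have hg₂surj : Surjective g₂ := by
    intro q
    obtain ⟨m, rfl⟩ := W.mkQ_surjective q
    set m'' : Fin (n+1) → M := fun i => Fin.cases 0 (fun j => m j.castSucc) i with hm''
    refine ⟨(m (Fin.last n), W.mkQ m''), ?_⟩
    rw [hg₂mk]
    congr 1
    ext i
    refine Fin.lastCases ?_ (fun j => ?_) i
    · rw [Pi.add_apply, Pi.single_eq_same, hshlast, add_zero]
    · rw [Pi.add_apply, Pi.single_eq_of_ne (Fin.castSucc_lt_last j).ne, hshcast, zero_add,
        hm'']
      simp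
  -- the map C and ftilde
  set C : M × X →ₗ[R] (Fin (n+1) → M) :=
    LinearMap.pi (fun i => Fin.cases (LinearMap.fst R M X)
      (fun j => φ ∘ₗ (ψ ^ (j : ℕ)) ∘ₗ LinearMap.snd R M X) i) with hC
  have hC0 : ∀ p : M × X, C p 0 = p.1 := by
    intro p; rw [hC]; simp [LinearMap.pi_apply]
  have hCs : ∀ (p : M × X) (j : Fin n), C p j.succ = φ ((ψ ^ (j : ℕ)) p.2) := by
    intro p j; rw [hC]; simp [LinearMap.pi_apply]
  set ft : M × X →ₗ[R] M × ((Fin (n+1) → M) ⧸ W) :=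
    LinearMap.prod (φ ∘ₗ (ψ ^ n) ∘ₗ LinearMap.snd R M X) (W.mkQ ∘ₗ C) with hft
  have hftapp : ∀ p : M × X, ft p = (φ ((ψ ^ n) p.2), W.mkQ (C p)) := fun p => rfl
  have hCf : ∀ x : X, C (φ x, ψ x) = S x := by
    intro x
    ext i
    refine Fin.cases ?_ (fun j => ?_) i
    · rw [hC0, hSapp]
      simp
    · rw [hCs, hSapp]
      have e2 : ((j.succ : Fin (n+1)) : ℕ) = (j : ℕ) + 1 := rfl
      rw [e2, ← Module.End.mul_apply, ← pow_succ]
  have hkerle : ker g ≤ ker ft := by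
    intro p hp
    rw [← hfg] at hp
    obtain ⟨x, rfl⟩ := hp
    rw [mem_ker, hftapp, hfdec]
    simp only
    apply Prod.ext
    · show φ ((ψ ^ n) (ψ x)) = 0
      rw [← Module.End.mul_apply, ← pow_succ, hnil', map_zero]
    · show W.mkQ (C (φ x, ψ x)) = 0
      rw [hCf, Submodule.mkQ_apply, Submodule.Quotient.mk_eq_zero]
      exact ⟨x, rfl⟩
  set e : ((M × X) ⧸ (ker g)) ≃ₗ[R] N := g.quotKerEquivOfSurjective hg with he
  set f₂ : N →ₗ[R] M × ((Fin (n+1) → M) ⧸ W) :=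
    ((ker g).liftQ ft hkerle) ∘ₗ e.symm.toLinearMap with hf₂
  have hemk : ∀ p : M × X, e (Submodule.Quotient.mk p) = g p := fun p => rfl
  have hfac : ∀ p : M × X, f₂ (g p) = ft p := by
    intro p
    have h1 : e.symm (g p) = Submodule.Quotient.mk p := by
      rw [← hemk, LinearEquiv.symm_apply_apply]
    rw [hf₂]
    show ((ker g).liftQ ft hkerle) (e.symm (g p)) = ft p
    rw [h1, Submodule.liftQ_apply]
  -- injectivity of f₂
  have hf₂zero : ∀ ν : N, f₂ ν = 0 → ν = 0 := by
    intro ν hν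
    obtain ⟨⟨b, x'⟩, rfl⟩ := hg ν
    rw [hfac, hftapp] at hν
    rw [Prod.ext_iff] at hν
    simp only [Prod.fst_zero, Prod.snd_zero] at hν
    obtain ⟨h1, h2'⟩ := hν
    have h1 : φ ((ψ ^ n) x') = 0 := h1
    have h2 : C (b, x') ∈ W := by
      rwa [Submodule.mkQ_apply, Submodule.Quotient.mk_eq_zero] at h2'
    obtain ⟨x, hx⟩ := h2
    have hb : φ x = b := by
      have := congrFun hx 0
      rw [hSapp, hC0] at this
      simpa using this
    have hj : ∀ j : Fin n, φ ((ψ ^ ((j : ℕ) + 1)) x) = φ ((ψ ^ (j : ℕ)) x') := by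
      intro j
      have := congrFun hx j.succ
      rw [hSapp, hCs] at this
      have e2 : ((j.succ : Fin (n+1)) : ℕ) = (j : ℕ) + 1 := rfl
      rw [e2] at this
      simpa using this
    have hxx : x' = ψ x := by
      rw [← sub_eq_zero]
      apply hSzero
      ext i
      rw [map_sub, Pi.sub_apply, hSapp, hSapp, Pi.zero_apply, sub_eq_zero]
      refine Fin.lastCases ?_ (fun j => ?_) i
      · have el : ((Fin.last n : Fin (n+1)) : ℕ) = n := rfl
        rw [el, h1, ← Module.End.mul_apply, ← pow_succ, hnil', map_zero]
      · have e1 : ((j.castSucc : Fin (n+1)) : ℕ) = (j : ℕ) := rfl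
        rw [e1, ← Module.End.mul_apply, ← pow_succ]
        exact (hj j).symm
    have : (b, x') ∈ ker g := by
      rw [← hfg, hxx, ← hb]
      exact ⟨x, rfl⟩
    rwa [mem_ker] at this
  have hf₂inj : Injective f₂ := by
    intro a b hab
    rw [← sub_eq_zero]
    apply hf₂zero
    rw [map_sub, hab, sub_self]
  -- g₂ ∘ ft = 0
  have hg₂ft : ∀ p : M × X, g₂ (ft p) = 0 := by
    intro p
    rw [hftapp, hg₂mk]
    have : Pi.single (Fin.last n) (φ ((ψ ^ n) p.2)) + sh (C p) = S p.2 := by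
      ext i
      refine Fin.lastCases ?_ (fun j => ?_) i
      · rw [Pi.add_apply, Pi.single_eq_same, hshlast, add_zero, hSapp]
        rfl
      · rw [Pi.add_apply, Pi.single_eq_of_ne (Fin.castSucc_lt_last j).ne, hshcast,
          zero_add, hCs, hSapp]
        rfl
    rw [this, Submodule.mkQ_apply, Submodule.Quotient.mk_eq_zero]
    exact ⟨p.2, rfl⟩
  -- exactness
  have hrange : range f₂ = ker g₂ := by
    apply le_antisymm
    · rintro _ ⟨ν, rfl⟩
      obtain ⟨p, rfl⟩ := hg ν
      rw [mem_ker, hfac]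
      exact hg₂ft p
    · rintro ⟨a, q⟩ hq
      obtain ⟨m, rfl⟩ := W.mkQ_surjective q
      rw [mem_ker, hg₂mk, Submodule.mkQ_apply, Submodule.Quotient.mk_eq_zero] at hq
      obtain ⟨x, hx⟩ := hq
      have hlast : a = φ ((ψ ^ n) x) := by
        have := congrFun hx (Fin.last n)
        rw [hSapp, Pi.add_apply, Pi.single_eq_same, hshlast, add_zero] at this
        exact this.symm
      have hcast : ∀ j : Fin n, m j.succ = φ ((ψ ^ (j : ℕ)) x) := by
        intro j
        have := congrFun hx j.castSucc
        rw [hSapp, Pi.add_apply, Pi.single_eq_of_ne (Fin.castSucc_lt_last j).ne,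
          hshcast, zero_add] at this
        exact this.symm
      refine ⟨g (m 0, x), ?_⟩
      rw [hfac, hftapp]
      simp only
      apply Prod.ext
      · exact hlast.symm
      · show W.mkQ (C (m 0, x)) = W.mkQ m
        congr 1
        ext i
        refine Fin.cases ?_ (fun j => ?_) i
        · rw [hC0]
        · rw [hCs, hcast]
  exact ⟨(Fin (n+1) → M) ⧸ W, inferInstance, inferInstance,
    fl_quotient' (fl_pi' hM (n+1)) W, f₂, g₂, hf₂inj, hg₂surj, hrange⟩

lemma exists_stable' {Z : Type v} [AddCommGroup Z] [Module R Z]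
    (hZ : IsFiniteLength R Z) (ψ : Z →ₗ[R] Z) :
    ∃ n : ℕ, 0 < n ∧ ∀ m, n ≤ m →
      ker (ψ ^ m) = ker (ψ ^ n) ∧ range (ψ ^ m) = range (ψ ^ n) := by
  obtain ⟨hN, hA⟩ := isFiniteLength_iff_isNoetherian_isArtinian.mp hZ
  obtain ⟨n₁, h₁⟩ := monotone_stabilizes_iff_noetherian.mpr hN ψ.iterateKer
  obtain ⟨n₂, h₂⟩ := IsArtinian.monotone_stabilizes ψ.iterateRange
  refine ⟨n₁ + n₂ + 1, Nat.succ_pos _, fun m hm => ⟨?_, ?_⟩⟩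
  · have a := h₁ m (by omega); have b := h₁ (n₁ + n₂ + 1) (by omega)
    exact (b.symm.trans a).symm
  · have a := h₂ m (by omega); have b := h₂ (n₁ + n₂ + 1) (by omega)
    exact (b.symm.trans a).symm

lemma riedtmann_to_zwara (hM : IsFiniteLength R M) (hX : IsFiniteLength R X)
    (f : X →ₗ[R] M × X) (g : M × X →ₗ[R] N)
    (hf : Injective f) (hg : Surjective g) (hfg : range f = ker g) :
    ∃ (Z : Type v) (_ : AddCommGroup Z) (_ : Module R Z), IsFiniteLength R Z ∧
      ∃ (f' : N →ₗ[R] M × Z) (g' : M × Z →ₗ[R] Z),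
        Injective f' ∧ Surjective g' ∧ range f' = ker g' := by
  classical
  set φ : X →ₗ[R] M := LinearMap.fst R M X ∘ₗ f with hφ
  set ψ : X →ₗ[R] X := LinearMap.snd R M X ∘ₗ f with hψ
  have hfdec : ∀ x : X, f x = (φ x, ψ x) := fun x => rfl
  obtain ⟨n, hn0, hstab⟩ := exists_stable' hX ψ
  obtain ⟨k, rfl⟩ : ∃ k, n = k + 1 := ⟨n - 1, by omega⟩
  set X' : Submodule R X := ker (ψ ^ (k+1)) with hX'
  have hψX' : ∀ x ∈ X', ψ x ∈ X' := by
    intro x hx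
    have hx2 : x ∈ ker (ψ ^ (k+2)) := by
      rw [(hstab (k+2) (by omega)).1]
      exact hx
    rw [hX', mem_ker] at *
    rw [← Module.End.mul_apply, ← pow_succ]
    exact hx2
  set ψ' : X' →ₗ[R] X' := ψ.restrict hψX' with hψ'
  set f' : X' →ₗ[R] M × X' := LinearMap.prod (φ ∘ₗ X'.subtype) ψ' with hf'
  set g' : M × X' →ₗ[R] N := g ∘ₗ LinearMap.prodMap LinearMap.id X'.subtype with hg'
  have hf'app : ∀ x : X', f' x = (φ (x : X), ψ' x) := fun x => rfl
  have hψ'val : ∀ x : X', ((ψ' x : X') : X) = ψ (x : X) := fun x => rfl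
  have hg'app : ∀ (m : M) (x : X'), g' (m, x) = g (m, (x : X)) := fun m x => rfl
  -- injectivity
  have hf'inj : Injective f' := by
    intro x y hxy
    rw [hf'app, hf'app, Prod.ext_iff] at hxy
    simp only at hxy
    obtain ⟨h1, h2⟩ := hxy
    have h2' : ψ (x : X) = ψ (y : X) := by
      rw [← hψ'val, ← hψ'val, h2]
    apply Subtype.ext
    apply hf
    rw [hfdec, hfdec, h1, h2']
  -- surjectivity
  have hg'surj : Surjective g' := by
    intro ν
    obtain ⟨⟨m, x⟩, rfl⟩ := hg ν
    have hmem : (ψ ^ (k+1)) x ∈ range (ψ ^ (2*(k+1))) := by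
      rw [(hstab (2*(k+1)) (by omega)).2]
      exact ⟨x, rfl⟩
    obtain ⟨y, hy⟩ := hmem
    set t : X := (ψ ^ (k+1)) y with hty
    have hx0 : x - ψ ((ψ ^ k) y) ∈ X' := by
      rw [hX', mem_ker, map_sub, sub_eq_zero]
      have e1 : ψ ((ψ ^ k) y) = (ψ ^ (k+1)) y := by
        rw [pow_succ', Module.End.mul_apply]
      rw [e1, ← Module.End.mul_apply, ← pow_add]
      have e2 : k + 1 + (k + 1) = 2 * (k + 1) := by ring
      rw [e2, hy]
    refine ⟨(m - φ ((ψ ^ k) y), ⟨x - ψ ((ψ ^ k) y), hx0⟩), ?_⟩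
    rw [hg'app]
    have hsplit : ((m, x) : M × X)
        = (m - φ ((ψ ^ k) y), x - ψ ((ψ ^ k) y)) + f ((ψ ^ k) y) := by
      rw [hfdec]
      apply Prod.ext <;> simp
    have hfk : g (f ((ψ ^ k) y)) = 0 := by
      have : f ((ψ ^ k) y) ∈ ker g := hfg ▸ ⟨(ψ ^ k) y, rfl⟩
      rwa [mem_ker] at this
    calc g (m - φ ((ψ ^ k) y), x - ψ ((ψ ^ k) y))
        = g (m - φ ((ψ ^ k) y), x - ψ ((ψ ^ k) y)) + g (f ((ψ ^ k) y)) := by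
          rw [hfk, add_zero]
      _ = g (m, x) := by rw [← map_add, ← hsplit]
  -- exactness
  have hfg' : range f' = ker g' := by
    apply le_antisymm
    · rintro _ ⟨x, rfl⟩
      rw [mem_ker, hf'app, hg'app, hψ'val, ← hfdec]
      have : f (x : X) ∈ ker g := hfg ▸ ⟨(x : X), rfl⟩
      rwa [mem_ker] at this
    · rintro ⟨m, x⟩ hp
      rw [mem_ker, hg'app] at hp
      have : (m, (x : X)) ∈ range f := by
        rw [hfg, mem_ker]
        exact hp
      obtain ⟨y, hy⟩ := this
      rw [hfdec, Prod.ext_iff] at hy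
      simp only at hy
      obtain ⟨hy1, hy2⟩ := hy
      have hx2 : (ψ ^ (k+1)) (x : X) = 0 := x.2
      have hyX' : y ∈ X' := by
        have hmem : y ∈ ker (ψ ^ (k+2)) := by
          rw [mem_ker, pow_succ, Module.End.mul_apply, hy2, hx2]
        rw [← (hstab (k+2) (by omega)).1]
        exact hmem
      refine ⟨⟨y, hyX'⟩, ?_⟩
      rw [hf'app]
      apply Prod.ext
      · exact hy1
      · apply Subtype.ext
        rw [hψ'val]
        exact hy2
  -- nilpotency of ψ'
  have hψ'pow : ∀ (j : ℕ) (x : X'), (((ψ' ^ j) x : X') : X) = (ψ ^ j) (x : X) := by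
    intro j
    induction j with
    | zero => intro x; simp
    | succ j ih =>
      intro x
      rw [pow_succ', Module.End.mul_apply, hψ'val, ih, ← Module.End.mul_apply, ← pow_succ']
  have hnil : (LinearMap.snd R M X' ∘ₗ f' : X' →ₗ[R] X') ^ (k + 1) = 0 := by
    have hsnd : (LinearMap.snd R M X' ∘ₗ f' : X' →ₗ[R] X') = ψ' := by
      apply LinearMap.ext; intro x; rfl
    rw [hsnd]
    apply LinearMap.ext; intro x
    apply Subtype.ext
    rw [hψ'pow, LinearMap.zero_apply]
    have : (x : X) ∈ ker (ψ ^ (k+1)) := x.2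
    rw [mem_ker] at this
    rw [this]
    rfl
  exact riedtmann_to_zwara_nil hM f' g' hf'inj hg'surj hfg' k hnil

end Dir2Nil

end RiedtmannZwaraAux

/-- Riedtmann–Zwara: for finite-length modules `M`, `N` over an artin algebra `Λ`,
there is a short exact sequence `0 → N → M ⊕ Z → Z → 0` with `Z` of finite length if and only if
there is a short exact sequence `0 → X → M ⊕ X → N → 0` with `X` of finite length. -/
theorem riedtmann_sequences_equivalent
    (k : Type u) [CommRing k] [IsArtinianRing k]
    (Λ : Type u) [Ring Λ] [Algebra k Λ] [Module.Finite k Λ]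
    (M N : Type v) [AddCommGroup M] [Module Λ M] [AddCommGroup N] [Module Λ N]
    (hM : IsFiniteLength Λ M) (hN : IsFiniteLength Λ N) :
    (∃ (Z : Type v) (_ : AddCommGroup Z) (_ : Module Λ Z), IsFiniteLength Λ Z ∧
      ∃ (f : N →ₗ[Λ] M × Z) (g : M × Z →ₗ[Λ] Z),
        Function.Injective f ∧ Function.Surjective g ∧ LinearMap.range f = LinearMap.ker g) ↔
    (∃ (X : Type v) (_ : AddCommGroup X) (_ : Module Λ X), IsFiniteLength Λ X ∧
      ∃ (f : X →ₗ[Λ] M × X) (g : M × X →ₗ[Λ] N),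
        Function.Injective f ∧ Function.Surjective g ∧ LinearMap.range f = LinearMap.ker g) := by
  constructor
  · rintro ⟨Z, _, _, hZ, f, g, hf, hg, hfg⟩
    exact zwara_to_riedtmann hM hZ f g hf hg hfg
  · rintro ⟨X, _, _, hX, f, g, hf, hg, hfg⟩
    exact riedtmann_to_zwara hM hX f g hf hg hfg
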